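/- Let A be an infinite set, (G,+) an abelian group, and Φ a set of functions from A to G such that A has the ESS property with respect to Φ and G. Then for every k ≥ 1 there exist m, N ∈ ℕ such that the following holds for every φ̄ = (φ_1,…,φ_k) ∈ Φ^k and every r ∈ G. Let R ⊆ A^k be the k-ary relation R = {(a_1,…,a_k) ∈ A^k : φ_1(a_1) + ⋯ + φ_k(a_k) = r}. Then for every ℓ with 1 ≤ ℓ ≤ k, every injection of ℓ variable slots into the k argument positions of R, and every finite set B ⊆ A: at most N equivalence classes of the relation 'same quantifier-free R-type over B' on A^ℓ contain m pairwise disjoint tuples. Here two tuples (a_1,…,a_ℓ), (a'_1,…,a'_ℓ) ∈ A^ℓ have the same quantifier-free R-type over B if (1) a_i = a_j ⇔ a'_i = a'_j for all i, j ≤ ℓ; (2) a_i = b ⇔ a'_i = b for all i ≤ ℓ and b ∈ B; and (3) for every k-tuple w̄ whose entries are either variable indices from {1,…,ℓ} or elements of B, the tuple obtained from w̄ by substituting a_i for index i lies in R if and only if the tuple obtained by substituting a'_i for index i lies in R. Two tuples in A^ℓ are disjoint if they have no coordinate value in common. -/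

import Mathlib

open Finset

/-- `A_V(φ̄;r)`: tuples `ā ∈ A^k` with `φ₁(a₁) + ⋯ + φ_k(a_k) = r` and no proper nonempty
subsum `Σ_{i∈I} φᵢ(aᵢ)` lying in `V`. -/
def ESSsolSetPhi {A G : Type*} [AddCommGroup G] {k : ℕ} (φ : Fin k → A → G) (V : Set G)
    (r : G) : Set (Fin k → A) :=
  {a | (∑ i, φ i (a i)) = r ∧
    ∀ I : Finset (Fin k), I.Nonempty → I ≠ Finset.univ → (∑ i ∈ I, φ i (a i)) ∉ V}

/-- `A` has the ESS property with respect to `Φ` and `G`: for every `k ≥ 1` there are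
`n_k ∈ ℕ` and finite `U_k, V_k ⊆ G` with `|A_{V_k}(φ̄;r)| ≤ n_k` for all `φ̄ ∈ Φ^k` and
all `r ∉ U_k`. -/
def HasESSPropertyPhi {A G : Type*} [AddCommGroup G] (Φ : Set (A → G)) : Prop :=
  ∀ k : ℕ, 1 ≤ k → ∃ (n : ℕ) (U V : Finset G),
    ∀ φ : Fin k → A → G, (∀ i, φ i ∈ Φ) → ∀ r : G, r ∉ U →
      (ESSsolSetPhi φ (V : Set G) r).Finite ∧ (ESSsolSetPhi φ (V : Set G) r).ncard ≤ n

/-- Substitution of an `ℓ`-tuple `a` into a `k`-tuple `w` of "variable indices or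
constants". -/
def substTuple {A : Type*} {k ℓ : ℕ} (a : Fin ℓ → A) (w : Fin k → Fin ℓ ⊕ A) :
    Fin k → A :=
  fun p => Sum.elim a id (w p)

/-- Two `ℓ`-tuples have the same quantifier-free `R`-type over `B`: they satisfy the same
equalities among coordinates, the same equalities with constants from `B`, and the same
instances of `R` with entries that are variables or constants from `B`. -/
def SameQfType {A : Type*} {k ℓ : ℕ} (R : Set (Fin k → A)) (B : Finset A)
    (a a' : Fin ℓ → A) : Prop :=
  (∀ i j : Fin ℓ, a i = a j ↔ a' i = a' j) ∧
  (∀ (i : Fin ℓ) (b : A), b ∈ B → (a i = b ↔ a' i = b)) ∧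
  (∀ w : Fin k → Fin ℓ ⊕ A, (∀ (p : Fin k) (b : A), w p = Sum.inr b → b ∈ B) →
    (substTuple a w ∈ R ↔ substTuple a' w ∈ R))

/-- Two tuples are disjoint if they share no coordinate value. -/
def DisjointTuples {A : Type*} {ℓ : ℕ} (a a' : Fin ℓ → A) : Prop :=
  ∀ p q : Fin ℓ, a p ≠ a' q

/-- The qf `R`-type over `B` of the tuple `a` supports an `m`-array: its class contains
`m` pairwise disjoint tuples. -/
def SupportsArray {A : Type*} {k ℓ : ℕ} (R : Set (Fin k → A)) (B : Finset A) (m : ℕ)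
    (a : Fin ℓ → A) : Prop :=
  ∃ c : Fin m → Fin ℓ → A, (∀ s, SameQfType R B (c s) a) ∧
    ∀ s t : Fin m, s ≠ t → DisjointTuples (c s) (c t)


lemma sum_orderIso_aux {M : Type*} [AddCommMonoid M] {n : ℕ} (S : Finset (Fin n))
    (f : Fin n → M) :
    (∑ q : Fin S.card, f ((S.orderIsoOfFin rfl q : S) : Fin n)) = ∑ p ∈ S, f p := by
  rw [← Finset.sum_coe_sort S f,
    ← Equiv.sum_comp (S.orderIsoOfFin rfl).toEquiv (fun p : S => f (p : Fin n))]
  rfl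

lemma ess_key {A G : Type*} [AddCommGroup G] (Φ : Set (A → G)) (hΦ : HasESSPropertyPhi Φ)
    (k : ℕ) :
    ∃ (m : ℕ) (D : Finset G), 1 ≤ m ∧ ∀ j : ℕ, 1 ≤ j → j ≤ k →
      ∀ ψ : Fin j → A → G, (∀ i, ψ i ∈ Φ) → ∀ g : G,
      ∀ x : Fin m → Fin j → A, (∀ s, (∑ i, ψ i (x s i)) = g) →
      (∀ s t : Fin m, s ≠ t → ∀ p q, x s p ≠ x t q) → g ∈ D := by
  classical
  induction k with
  | zero => exact ⟨1, ∅, le_refl 1, fun j hj1 hj0 => absurd (hj1.trans hj0) (by omega)⟩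
  | succ k ih =>
    obtain ⟨m₀, D₀, hm₀, ihc⟩ := ih
    obtain ⟨n, U, V, hESS⟩ := hΦ (k + 1) (by omega)
    set pairs := ((Finset.univ : Finset (Finset (Fin (k + 1)))) ×ˢ V).card with hpairs
    refine ⟨m₀ + n + pairs * m₀ + 1, U ∪ D₀ ∪ Finset.image₂ (· + ·) V D₀, by omega, ?_⟩
    set m₁ := m₀ + n + pairs * m₀ + 1 with hm₁
    intro j hj1 hjk ψ hψ g x hsum hdisj
    rcases Nat.lt_or_ge j (k + 1) with hlt | hge
    · -- delegate to inductive hypothesis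
      have hle : m₀ ≤ m₁ := by omega
      have := ihc j hj1 (by omega) ψ hψ g (fun s => x (Fin.castLE hle s))
        (fun s => hsum _)
        (fun s t hst => hdisj _ _ (fun h => hst (Fin.castLE_injective hle h)))
      exact Finset.mem_union_left _ (Finset.mem_union_right _ this)
    · have hj : j = k + 1 := by omega
      subst hj
      by_cases hgU : g ∈ U
      · exact Finset.mem_union_left _ (Finset.mem_union_left _ hgU)
      obtain ⟨hfin, hcard⟩ := hESS ψ hψ g hgU
      set Good := Finset.univ.filter (fun s : Fin m₁ => x s ∈ ESSsolSetPhi ψ (V : Set G) g)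
        with hGoodDef
      have hGoodcard : Good.card ≤ n := by
        have h1 : Good.card ≤ hfin.toFinset.card := by
          apply Finset.card_le_card_of_injOn (fun s => x s)
          · intro s hs
            rw [Finset.mem_coe, Set.Finite.mem_toFinset]
            exact (Finset.mem_filter.1 hs).2
          · intro s _ t _ hxy
            by_contra hst
            exact hdisj s t hst 0 0 (congrFun hxy 0)
        rw [← Set.ncard_eq_toFinset_card _ hfin] at h1
        exact h1.trans hcard
      set Bad := Finset.univ.filter (fun s : Fin m₁ => ¬ x s ∈ ESSsolSetPhi ψ (V : Set G) g)
        with hBadDef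
      have hBadcard : pairs * m₀ + 1 ≤ Bad.card := by
        have htot := Finset.card_filter_add_card_filter_not
          (s := (Finset.univ : Finset (Fin m₁)))
          (p := fun s => x s ∈ ESSsolSetPhi ψ (V : Set G) g)
        rw [Finset.card_univ, Fintype.card_fin] at htot
        rw [← hGoodDef, ← hBadDef] at htot
        omega
      have hBadex : ∀ s ∈ Bad, ∃ Iv : Finset (Fin (k + 1)) × G,
          Iv.1.Nonempty ∧ Iv.1 ≠ Finset.univ ∧ Iv.2 ∈ V ∧
            (∑ i ∈ Iv.1, ψ i (x s i)) = Iv.2 := by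
        intro s hs
        have hns := (Finset.mem_filter.1 hs).2
        simp only [ESSsolSetPhi, Set.mem_setOf_eq, hsum s, true_and, not_forall] at hns
        obtain ⟨I, hIne, hInu, hIv⟩ := hns
        rw [not_not] at hIv
        exact ⟨(I, ∑ i ∈ I, ψ i (x s i)), hIne, hInu, hIv, rfl⟩
      choose! f hf1 hf2 hf3 hf4 using hBadex
      have hmaps : ∀ s ∈ Bad, f s ∈ (Finset.univ ×ˢ V :
          Finset (Finset (Fin (k + 1)) × G)) :=
        fun s hs => Finset.mem_product.2 ⟨Finset.mem_univ _, hf3 s hs⟩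
      have hBadne : Bad.Nonempty := Finset.card_pos.1 (by omega)
      have htne : ((Finset.univ : Finset (Finset (Fin (k + 1)))) ×ˢ V).Nonempty :=
        ⟨f hBadne.choose, hmaps _ hBadne.choose_spec⟩
      obtain ⟨⟨I, v⟩, hIvmem, hfib⟩ :=
        Finset.exists_le_card_fiber_of_mul_le_card_of_maps_to (n := m₀) hmaps htne
          (by rw [← hpairs]; omega)
      obtain ⟨T, hTsub, hTcard⟩ := Finset.exists_subset_card_eq hfib
      have hvV : v ∈ V := (Finset.mem_product.1 hIvmem).2
      set eT := T.orderIsoOfFin hTcard with heT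
      set sel : Fin m₀ → Fin m₁ := fun s => ((eT s : T) : Fin m₁) with hsel
      have hselmem : ∀ s, sel s ∈ Bad ∧ f (sel s) = (I, v) := by
        intro s
        have := hTsub (eT s).2
        exact ⟨(Finset.mem_filter.1 this).1, (Finset.mem_filter.1 this).2⟩
      have hselinj : Function.Injective sel :=
        fun s t h => (eT.injective (Subtype.ext h))
      -- data about I
      have hIdata : I.Nonempty ∧ I ≠ Finset.univ := by
        obtain ⟨hb, hfv⟩ := hselmem ⟨0, hm₀⟩
        have h1 := hf1 _ hb
        have h2 := hf2 _ hb
        rw [hfv] at h1 h2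
        exact ⟨h1, h2⟩
      have hIsum : ∀ s : Fin m₀, (∑ i ∈ I, ψ i (x (sel s) i)) = v := by
        intro s
        obtain ⟨hb, hfv⟩ := hselmem s
        have h4 := hf4 _ hb
        rw [hfv] at h4
        exact h4
      have hIcne : Iᶜ.Nonempty := by
        rw [Finset.nonempty_iff_ne_empty]
        intro h
        exact hIdata.2 (by rwa [Finset.compl_eq_empty_iff] at h)
      have hj'1 : 1 ≤ Iᶜ.card := Finset.card_pos.2 hIcne
      have hj'k : Iᶜ.card ≤ k := by
        have h1 : 1 ≤ I.card := Finset.card_pos.2 hIdata.1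
        have h2 := Finset.card_compl I
        rw [Fintype.card_fin] at h2
        omega
      set e' := Iᶜ.orderIsoOfFin rfl with he'
      have hsub : g - v ∈ D₀ := by
        apply ihc Iᶜ.card hj'1 hj'k (fun q => ψ (e' q)) (fun q => hψ _) (g - v)
          (fun s q => x (sel s) (e' q))
        · intro s
          have h3 := sum_orderIso_aux Iᶜ (fun p => ψ p (x (sel s) p))
          rw [h3]
          have h5 := Finset.sum_add_sum_compl I (fun p => ψ p (x (sel s) p))
          rw [hIsum s, hsum (sel s)] at h5
          exact (eq_sub_of_add_eq' h5)
        · intro s t hst p q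
          exact hdisj _ _ (fun h => hst (hselinj h)) _ _
      have : v + (g - v) ∈ Finset.image₂ (· + ·) V D₀ :=
        Finset.mem_image₂_of_mem hvV hsub
      rw [add_sub_cancel] at this
      exact Finset.mem_union_right _ this

/-- Proposition 6.7: if the infinite set `A` has the ESS property with
respect to `Φ` and `G`, then each relation `R = A(φ̄;r)` has uniformly bounded arrays:
for every `k ≥ 1` there are `m, N` such that for every `φ̄ ∈ Φ^k`, `r ∈ G`,
`1 ≤ ℓ ≤ k`, every injection of the `ℓ` variable slots into the `k` argument positions,
and every finite `B ⊆ A`, at most `N` quantifier-free `R`-types over `B` in `ℓ` variables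
support an `m`-array (i.e. there do not exist `N + 1` pairwise non-equivalent tuples each
of whose classes contains `m` pairwise disjoint tuples). -/
theorem ESS_implies_uniformly_bounded_arrays {A G : Type*} [Infinite A] [AddCommGroup G]
    (Φ : Set (A → G)) (hΦ : HasESSPropertyPhi Φ) (k : ℕ) (hk : 1 ≤ k) :
    ∃ m N : ℕ, ∀ φ : Fin k → A → G, (∀ i, φ i ∈ Φ) → ∀ r : G,
      ∀ ℓ : ℕ, 1 ≤ ℓ → ℓ ≤ k → ∀ ι : Fin ℓ → Fin k, Function.Injective ι →
      ∀ B : Finset A,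
      ¬ ∃ g : Fin (N + 1) → Fin ℓ → A,
        (∀ t, SupportsArray {x : Fin k → A | (∑ i, φ i (x i)) = r} B m (g t)) ∧
        (∀ t t' : Fin (N + 1), t ≠ t' →
          ¬ SameQfType {x : Fin k → A | (∑ i, φ i (x i)) = r} B (g t) (g t')) := by
  classical
  obtain ⟨m₀, D, hm₀, claim⟩ := ess_key Φ hΦ k
  refine ⟨m₀ + 2, (Finset.range (k + 1)).sup (fun ℓ' => Fintype.card
    ((Fin ℓ' → Fin ℓ' → Bool) × ((Fin k → Option (Fin ℓ')) → Option {x // x ∈ D}))), ?_⟩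
  intro φ hφ r ℓ hℓ1 hℓk ι hι B
  rintro ⟨g, hsup, hdiff⟩
  set R : Set (Fin k → A) := {x : Fin k → A | (∑ i, φ i (x i)) = r} with hR
  set σf : (Fin ℓ → A) → (Fin k → Option (Fin ℓ)) → G :=
    fun a u => ∑ p, (u p).elim 0 (fun i => φ p (a i)) with hσf
  set cst : (Fin k → Fin ℓ ⊕ A) → G :=
    fun w => ∑ p, Sum.elim (fun _ : Fin ℓ => (0 : G)) (fun b => φ p b) (w p) with hcst
  set enc : (Fin ℓ → A) →
      (Fin ℓ → Fin ℓ → Bool) × ((Fin k → Option (Fin ℓ)) → Option {x // x ∈ D}) :=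
    fun a => (fun i j => decide (a i = a j),
      fun u => if h : σf a u ∈ D then some ⟨σf a u, h⟩ else none) with henc
  -- splitting the sum of a substituted tuple
  have hsplit : ∀ (a : Fin ℓ → A) (w : Fin k → Fin ℓ ⊕ A),
      (∑ p, φ p (substTuple a w p)) = σf a (fun p => (w p).getLeft?) + cst w := by
    intro a w
    rw [hσf, hcst, ← Finset.sum_add_distrib]
    apply Finset.sum_congr rfl
    intro p _
    cases h : w p <;> simp [substTuple, h]
  -- tuples supporting arrays have no coordinates in B
  have hnoB : ∀ a : Fin ℓ → A, SupportsArray R B (m₀ + 2) a → ∀ i, a i ∉ B := by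
    rintro a ⟨c, hty, hdj⟩ i hiB
    have h0 : c 0 i = a i := ((hty 0).2.1 i (a i) hiB).2 rfl
    have h1 : c 1 i = a i := ((hty 1).2.1 i (a i) hiB).2 rfl
    have hne : (0 : Fin (m₀ + 2)) ≠ 1 := by
      intro h
      have := congrArg Fin.val h
      simp [Fin.val_zero, Fin.val_one] at this
    exact hdj 0 1 hne i i (by rw [h0, h1])
  -- true atoms with at least one variable force values in D
  have hatom : ∀ a : Fin ℓ → A, SupportsArray R B (m₀ + 2) a →
      ∀ w : Fin k → Fin ℓ ⊕ A, (∀ p b, w p = Sum.inr b → b ∈ B) →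
      substTuple a w ∈ R → (∃ p i, w p = Sum.inl i) → r - cst w ∈ D := by
    rintro a ⟨c, hty, hdj⟩ w hwB haR ⟨p₀, i₀, hp₀⟩
    set S : Finset (Fin k) := Finset.univ.filter (fun p => (w p).isLeft) with hS
    have hSne : S.Nonempty := ⟨p₀, by simp [hS, hp₀]⟩
    have hS1 : 1 ≤ S.card := Finset.card_pos.2 hSne
    have hSk : S.card ≤ k := le_trans (Finset.card_le_univ S) (by simp)
    set e := S.orderIsoOfFin rfl with he
    set vidx : Fin k → Fin ℓ := fun p => ((w p).getLeft?).getD ⟨0, hℓ1⟩ with hvidx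
    have hcs : ∀ s : Fin (m₀ + 2),
        (∑ q : Fin S.card, φ ((e q : S) : Fin k) (c s (vidx ((e q : S) : Fin k)))) =
          r - cst w := by
      intro s
      have h1 : substTuple (c s) w ∈ R := ((hty s).2.2 w hwB).2 haR
      have h2 : σf (c s) (fun p => (w p).getLeft?) + cst w = r := by
        rw [← hsplit]; exact h1
      have h3 := sum_orderIso_aux S (fun p => φ p (c s (vidx p)))
      rw [h3]
      have h4 : σf (c s) (fun p => (w p).getLeft?) = ∑ p ∈ S, φ p (c s (vidx p)) := by
        have h5 : σf (c s) (fun p => (w p).getLeft?)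
            = ∑ p ∈ S, ((w p).getLeft?).elim 0 (fun i => φ p (c s i)) := by
          exact (Finset.sum_subset (Finset.subset_univ S) (fun p _ hp => by
            rcases hw : w p with i | b
            · exact absurd (by rw [hS]; simp [hw]) hp
            · simp [hw])).symm
        rw [h5]
        apply Finset.sum_congr rfl
        intro p hp
        rcases hw : w p with i | b
        · simp [hvidx, hw]
        · rw [hS] at hp
          simp [hw] at hp
      rw [← h4]
      exact eq_sub_of_add_eq h2
    have hmle : m₀ ≤ m₀ + 2 := by omega
    exact claim S.card hS1 hSk (fun q => φ ((e q : S) : Fin k)) (fun q => hφ _)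
      (r - cst w)
      (fun s q => c (Fin.castLE hmle s) (vidx ((e q : S) : Fin k)))
      (fun s => hcs _)
      (fun s t hst p q => hdj _ _ (fun h => hst (Fin.castLE_injective hmle h)) _ _)
  -- transfer of atoms along equal encodings
  have htrans : ∀ a a' : Fin ℓ → A, SupportsArray R B (m₀ + 2) a →
      SupportsArray R B (m₀ + 2) a' → enc a = enc a' →
      ∀ w : Fin k → Fin ℓ ⊕ A, (∀ p b, w p = Sum.inr b → b ∈ B) →
      substTuple a w ∈ R → substTuple a' w ∈ R := by
    intro a a' hsa hsa' hencc w hwB haR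
    have hmem : σf a (fun p => (w p).getLeft?) + cst w = r := by
      rw [← hsplit]; exact haR
    show (∑ p, φ p (substTuple a' w p)) = r
    rw [hsplit]
    by_cases hvar : ∃ p i, w p = Sum.inl i
    · have hval : σf a (fun p => (w p).getLeft?) = r - cst w := eq_sub_of_add_eq hmem
      have hD : σf a (fun p => (w p).getLeft?) ∈ D := by
        rw [hval]; exact hatom a hsa w hwB haR hvar
      have hc := congrFun (congrArg Prod.snd hencc) (fun p => (w p).getLeft?)
      simp only [henc] at hc
      rw [dif_pos hD] at hc
      by_cases hD' : σf a' (fun p => (w p).getLeft?) ∈ D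
      · rw [dif_pos hD'] at hc
        have : σf a' (fun p => (w p).getLeft?) = σf a (fun p => (w p).getLeft?) := by
          have := Option.some_injective _ hc.symm
          exact congrArg Subtype.val this
        rw [this]
        exact hmem
      · rw [dif_neg hD'] at hc
        exact absurd hc (Option.some_ne_none _)
    · have hnone : ∀ p : Fin k, (w p).getLeft? = none := by
        intro p
        rcases hw : w p with i | b
        · exact absurd ⟨p, i, hw⟩ hvar
        · simp [hw]
      have h0 : σf a' (fun p => (w p).getLeft?) = σf a (fun p => (w p).getLeft?) := by
        rw [hσf]
        simp [hnone]
      rw [h0]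
      exact hmem
  -- equal encodings give the same qf type
  have hsame : ∀ a a' : Fin ℓ → A, SupportsArray R B (m₀ + 2) a →
      SupportsArray R B (m₀ + 2) a' → enc a = enc a' → SameQfType R B a a' := by
    intro a a' hsa hsa' he
    refine ⟨?_, ?_, ?_⟩
    · intro i j
      have h1 := congrFun (congrFun (congrArg Prod.fst he) i) j
      simp only [henc] at h1
      exact decide_eq_decide.1 h1
    · intro i b hb
      exact iff_of_false (fun h => hnoB a hsa i (h ▸ hb)) (fun h => hnoB a' hsa' i (h ▸ hb))
    · intro w hwB
      exact ⟨htrans a a' hsa hsa' he w hwB, htrans a' a hsa' hsa he.symm w hwB⟩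
  -- counting
  have hcard : Fintype.card
      ((Fin ℓ → Fin ℓ → Bool) × ((Fin k → Option (Fin ℓ)) → Option {x // x ∈ D})) <
      (Finset.range (k + 1)).sup (fun ℓ' => Fintype.card
        ((Fin ℓ' → Fin ℓ' → Bool) × ((Fin k → Option (Fin ℓ')) → Option {x // x ∈ D}))) + 1 :=
    Nat.lt_succ_of_le (Finset.le_sup (f := fun ℓ' => Fintype.card
      ((Fin ℓ' → Fin ℓ' → Bool) × ((Fin k → Option (Fin ℓ')) → Option {x // x ∈ D})))
      (Finset.mem_range.2 (show ℓ < k + 1 by omega)))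
  obtain ⟨t, t', htt, hee⟩ := Fintype.exists_ne_map_eq_of_card_lt (fun t => enc (g t))
    (by rw [Fintype.card_fin]; exact hcard)
  exact hdiff t t' htt (hsame _ _ (hsup t) (hsup t') hee)
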